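/- Any simple-wave adjoint solution λ₀ lying in the kernel of sin(ζ)Aᵀ − cos(ζ)Bᵀ for ζ = α ± μ (Mach-line directions) satisfies the Giles–Pierce relation λ₀¹ = H λ₀⁴ component-wise, i.e., its first component equals the total enthalpy H times its fourth component. -/

import Mathlib

/-- The 2-D Euler flux Jacobian in the direction `(nx, ny)`:  `An γ u v H nx ny = nx • A + ny • B`,
where `A`, `B` are the Jacobians of the Euler fluxes w.r.t. conservative variables. -/
noncomputable def An (γ u v H nx ny : ℝ) : Matrix (Fin 4) (Fin 4) ℝ :=
  !![0, nx, ny, 0;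
     (γ-1)*((u^2+v^2)/2)*nx - u*(u*nx+v*ny), (u*nx+v*ny)-(γ-2)*u*nx, u*ny-(γ-1)*v*nx, (γ-1)*nx;
     (γ-1)*((u^2+v^2)/2)*ny - v*(u*nx+v*ny), v*nx-(γ-1)*u*ny, (u*nx+v*ny)-(γ-2)*v*ny, (γ-1)*ny;
     ((γ-1)*((u^2+v^2)/2)-H)*(u*nx+v*ny), H*nx-(γ-1)*u*(u*nx+v*ny), H*ny-(γ-1)*v*(u*nx+v*ny), γ*(u*nx+v*ny)]

open Real

/- Any simple-wave adjoint solution λ₀ in the kernel of sin ζ Aᵀ − cos ζ Bᵀ, for a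
Mach-line direction ζ = α ± μ, satisfies the Giles–Pierce relation λ₀¹ = H λ₀⁴. -/
theorem mach_line_kernel_giles_pierce (γ ρ c M α μ ζ u v H : ℝ) (lam0 : Fin 4 → ℝ)
    (hγ : 1 < γ) (hρ : 0 < ρ) (hc : 0 < c) (hM : 1 < M)
    (hu : u = M * c * Real.cos α) (hv : v = M * c * Real.sin α)
    (hμ : μ = Real.arcsin (1 / M))
    (hH : H = c^2/(γ-1) + (u^2+v^2)/2)
    (hζ : ζ = α - μ ∨ ζ = α + μ)
    (hker : (An γ u v H (Real.sin ζ) (-(Real.cos ζ))).transpose.mulVec lam0 = 0) :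
    lam0 0 = H * lam0 3 := by
  set nx : ℝ := Real.sin ζ with hnx
  set ny : ℝ := -(Real.cos ζ) with hny
  set q : ℝ := u * nx + v * ny with hq
  have hγ1 : γ - 1 ≠ 0 := by linarith
  have hM0 : (0:ℝ) < M := by linarith
  -- q = ± c
  have hsinμ : Real.sin μ = 1 / M := by
    have h01 : (0:ℝ) < 1 / M := by positivity
    have h1M : 1 / M ≤ 1 := by rw [div_le_one hM0]; linarith
    rw [hμ, Real.sin_arcsin (by linarith) h1M]
  have hqval : q = c ∨ q = -c := by
    have hqs : q = M * c * Real.sin (ζ - α) := by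
      rw [hq, hu, hv, hnx, hny, Real.sin_sub]; ring
    rcases hζ with h | h
    · right
      rw [hqs, h]
      have : α - μ - α = -μ := by ring
      rw [this, Real.sin_neg, hsinμ]
      field_simp
    · left
      rw [hqs, h]
      have : α + μ - α = μ := by ring
      rw [this, hsinμ]
      field_simp
  have hq2 : q ^ 2 = c ^ 2 := by rcases hqval with h | h <;> rw [h] <;> ring
  have hqne : q ≠ 0 := by
    rcases hqval with h | h <;> rw [h] <;> [exact ne_of_gt hc; exact ne_of_lt (by linarith)]
  -- extract the four scalar equations
  have e0 := congrFun hker 0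
  have e1 := congrFun hker 1
  have e2 := congrFun hker 2
  have e3 := congrFun hker 3
  simp only [An, Matrix.mulVec, Matrix.transpose_apply, dotProduct,
    Fin.sum_univ_four, Matrix.cons_val', Matrix.cons_val_zero, Matrix.cons_val_one,
    Matrix.head_cons, Matrix.head_fin_const, Matrix.empty_val', Matrix.cons_val_fin_one,
    Matrix.cons_val_two, Matrix.cons_val_three, Matrix.tail_cons, Matrix.of_apply,
    Pi.zero_apply] at e0 e1 e2 e3
  have h1 : nx ^ 2 + ny ^ 2 = 1 := by
    rw [hnx, hny]; simp [Real.sin_sq_add_cos_sq]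
  have hH' : (γ - 1) * H = c ^ 2 + (γ - 1) * ((u ^ 2 + v ^ 2) / 2) := by
    rw [hH]; field_simp
  -- step B : u*l1 + v*l2 = -((u^2+v^2)/2 + H) * l3
  have hB' : q * ((γ - 1) * ((u * lam0 1 + v * lam0 2) +
      ((u ^ 2 + v ^ 2) / 2 + H) * lam0 3)) = 0 := by
    linear_combination ((γ - 1) * ((u ^ 2 + v ^ 2) / 2)) * e3 - (γ - 1) * e0
  have hB : u * lam0 1 + v * lam0 2 = -(((u ^ 2 + v ^ 2) / 2 + H) * lam0 3) := by
    rcases mul_eq_zero.mp hB' with h | h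
    · exact absurd h hqne
    · rcases mul_eq_zero.mp h with h | h
      · exact absurd h hγ1
      · linarith
  -- final combination
  have hfin : (γ - 1) * (lam0 0 - H * lam0 3) = 0 := by
    linear_combination ((γ - 1) * nx) * e1 + ((γ - 1) * ny) * e2 - ((2 - γ) * q) * e3 -
      (γ - 1) * hB -
      ((γ - 1) * (lam0 0 - ((u ^ 2 + v ^ 2) / 2) * lam0 3 +
        (u * lam0 1 + v * lam0 2 + ((u ^ 2 + v ^ 2) / 2 + H) * lam0 3))) * h1 -
      lam0 3 * hH' + lam0 3 * hq2
  have := mul_eq_zero.mp hfin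
  rcases this with h | h
  · exact absurd h hγ1
  · linarith
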